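/- In the latent Gaussian model, let f̂ be the RF-ind Vecchia approximation of x = (z_o, y): f̂(x) = (∏_{i∈o} f(z_i | z_{g(i)})) · ∏_{i=1}^n f(y_i | z_{q_z(i)}), where g(i) ⊆ o consists of indices ordered before i and q_z(i) ⊆ o for every i (each latent variable conditions only on observed responses). Then the implied posterior predictive distribution factorizes as f̂(y | z_o) = ∏_{i=1}^n f(y_i | z_{q_z(i)}); that is, under f̂, given z_o the components of y are independent, with y_i | z_o distributed as the exact local-kriging conditional N(E(y_i | z_{q_z(i)}), Var(y_i | z_{q_z(i)})). In particular, the matrix W = Q_{ℓℓ} (the y-block of the precision matrix of f̂) is diagonal with W_{ii} = 1/Var(y_i | z_{q_z(i)}). -/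

import Mathlib

open MeasureTheory Real Finset Matrix

noncomputable section

/-- Density of the one-dimensional normal distribution `N(μ, v)` evaluated at `t`. -/
def gauss1 (μ v t : ℝ) : ℝ :=
  (Real.sqrt (2 * π * v))⁻¹ * Real.exp (-((t - μ) ^ 2) / (2 * v))

variable {ι : Type*} [Fintype ι] [DecidableEq ι]

/-- Joint density of the multivariate normal distribution `N(μ, K)` on `ι → ℝ`. -/
def gaussDensity (μ : ι → ℝ) (K : Matrix ι ι ℝ) (x : ι → ℝ) : ℝ :=
  (Real.sqrt ((2 * π) ^ (Fintype.card ι) * K.det))⁻¹ *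
    Real.exp (-(dotProduct (x - μ) (K⁻¹ *ᵥ (x - μ))) / 2)

/-- Submatrix of `K` with rows and columns in the index set `G`. -/
def subm (K : Matrix ι ι ℝ) (G : Finset ι) : Matrix G G ℝ :=
  Matrix.of fun j k => K j.1 k.1

/-- Gaussian conditional mean `E(x i | x_G)` for `x ~ N(μ, K)`, as a function of `x`. -/
def condMean (μ : ι → ℝ) (K : Matrix ι ι ℝ) (i : ι) (G : Finset ι) (x : ι → ℝ) : ℝ :=
  μ i + dotProduct (fun j : G => K i j.1)
    ((subm K G)⁻¹ *ᵥ fun j : G => x j.1 - μ j.1)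

/-- Gaussian conditional variance `Var(x i | x_G)` for `x ~ N(μ, K)`
(it does not depend on the value of `x_G`). -/
def condVar (K : Matrix ι ι ℝ) (i : ι) (G : Finset ι) : ℝ :=
  K i i - dotProduct (fun j : G => K i j.1)
    ((subm K G)⁻¹ *ᵥ fun j : G => K j.1 i)

/-- Gaussian conditional covariance `Cov(x a, x b | x_G)` for `x ~ N(0, K)`. -/
def condCov (K : Matrix ι ι ℝ) (a b : ι) (G : Finset ι) : ℝ :=
  K a b - dotProduct (fun j : G => K a j.1)
    ((subm K G)⁻¹ *ᵥ fun j : G => K j.1 b)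

/-- The exact Gaussian conditional density `f(x i | x_G)` for `x ~ N(μ, K)`. -/
def condDens (μ : ι → ℝ) (K : Matrix ι ι ℝ) (i : ι) (G : Finset ι) (x : ι → ℝ) : ℝ :=
  gauss1 (condMean μ K i G x) (condVar K i G) (x i)

/-- The general Vecchia approximation `f̂(x) = ∏ i, f(x i | x_{g i})` of `N(μ, K)`. -/
def vecchia (μ : ι → ℝ) (K : Matrix ι ι ℝ) (g : ι → Finset ι) (x : ι → ℝ) : ℝ :=
  ∏ i, condDens μ K i (g i) x

/-- Kullback–Leibler divergence `KL(f ‖ g) = ∫ f log(f/g)` between densities on `ι → ℝ`. -/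
def KLdiv (f g : (ι → ℝ) → ℝ) : ℝ :=
  ∫ x : ι → ℝ, f x * Real.log (f x / g x)


/-- Covariance matrix of `x = (z_o, y)` for the latent model `y ~ N(0,K)`, `z = y + ε`,
`ε ~ N(0,D)` independent of `y`: `Sum.inl j` (for `j : ↥o`) indexes the observed response
`z j` and `Sum.inr i` (for `i : Fin n`) indexes the latent variable `y i`. -/
def rfCov {n : ℕ} (K D : Matrix (Fin n) (Fin n) ℝ) (o : Finset (Fin n)) :
    Matrix (↥o ⊕ Fin n) (↥o ⊕ Fin n) ℝ :=
  Matrix.fromBlocks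
    (Matrix.of fun j k => (K + D) j.1 k.1)
    (Matrix.of fun j i => K j.1 i)
    (Matrix.of fun i j => K i j.1)
    K

/-- The RF-ind (local kriging) conditioning sets for `x = (z_o, y)`: each observed response
`z j` conditions on previously ordered responses `z_{gz j}`, and each latent variable `y i`
conditions only on observed responses `z_{qz i}`. -/
def gInd {n : ℕ} (o : Finset (Fin n)) (gz : ↥o → Finset ↥o) (qz : Fin n → Finset ↥o) :
    ↥o ⊕ Fin n → Finset (↥o ⊕ Fin n)
  | Sum.inl j => (gz j).image Sum.inl
  | Sum.inr i => (qz i).image Sum.inl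

set_option linter.unusedSectionVars false

lemma sum_dext (G : Finset ι) (u : ↥G → ℝ) (f : ι → ℝ) :
    ∑ i : ι, f i * (if h : i ∈ G then u ⟨i, h⟩ else 0) = ∑ j : ↥G, f j.1 * u j := by
  classical
  rw [Finset.univ_eq_attach]
  rw [show (∑ j ∈ G.attach, f j.1 * u j) =
      ∑ j ∈ G.attach, f j.1 * (if h : (j : ι) ∈ G then u ⟨j, h⟩ else 0) from
    Finset.sum_congr rfl (fun j _ => by rw [dif_pos j.2])]
  rw [Finset.sum_attach G (fun i => f i * (if h : i ∈ G then u ⟨i, h⟩ else 0))]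
  refine (Finset.sum_subset (Finset.subset_univ G) (fun k _ hk => by simp [dif_neg hk])).symm

lemma mulVec_dext (M : Matrix ι ι ℝ) (G : Finset ι) (u : ↥G → ℝ) (j : ι) :
    (M *ᵥ fun k => if h : k ∈ G then u ⟨k, h⟩ else 0) j = ∑ k : ↥G, M j k.1 * u k :=
  sum_dext G u (M j)

lemma dext_dot (G : Finset ι) (u : ↥G → ℝ) (z : ι → ℝ) :
    dotProduct (fun k => if h : k ∈ G then u ⟨k, h⟩ else 0) z = ∑ j : ↥G, u j * z j.1 := by
  rw [dotProduct]
  rw [show (∑ i : ι, (if h : i ∈ G then u ⟨i, h⟩ else 0) * z i)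
      = ∑ i : ι, z i * (if h : i ∈ G then u ⟨i, h⟩ else 0) from
    Finset.sum_congr rfl (fun i _ => mul_comm _ _), sum_dext G u z]
  exact Finset.sum_congr rfl (fun j _ => mul_comm _ _)

lemma dext_quad (M : Matrix ι ι ℝ) (G : Finset ι) (u : ↥G → ℝ) :
    dotProduct (fun k => if h : k ∈ G then u ⟨k, h⟩ else 0)
      (M *ᵥ fun k => if h : k ∈ G then u ⟨k, h⟩ else 0)
      = dotProduct u (subm M G *ᵥ u) := by
  rw [dext_dot, dotProduct]
  refine Finset.sum_congr rfl (fun j _ => ?_)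
  rw [mulVec_dext, mulVec]
  congr 1

lemma subm_posDef {M : Matrix ι ι ℝ} (hM : M.PosDef) (G : Finset ι) : (subm M G).PosDef := by
  refine Matrix.PosDef.of_dotProduct_mulVec_pos ?_ ?_
  · ext j k
    simpa [subm, Matrix.conjTranspose_apply] using hM.1.apply j.1 k.1
  · intro x hx
    have h0 : (fun k => if h : k ∈ G then x ⟨k, h⟩ else 0) ≠ 0 := by
      obtain ⟨j, hj⟩ := Function.ne_iff.mp hx
      refine Function.ne_iff.mpr ⟨j.1, ?_⟩
      simpa [dif_pos j.2] using hj
    have := hM.dotProduct_mulVec_pos h0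
    rw [star_trivial, dext_quad] at this
    simpa using this

lemma condVar_pos {M : Matrix ι ι ℝ} (hM : M.PosDef) {i : ι} {G : Finset ι} (hi : i ∉ G) :
    0 < condVar M i G := by
  classical
  set A := subm M G with hA
  have hApd : A.PosDef := subm_posDef hM G
  have hdet : IsUnit A.det := isUnit_iff_ne_zero.mpr hApd.det_pos.ne'
  set c : ↥G → ℝ := fun j => M j.1 i with hc
  set u : ↥G → ℝ := A⁻¹ *ᵥ c with hu
  have hAu : A *ᵥ u = c := by
    rw [hu, mulVec_mulVec, Matrix.mul_nonsing_inv A hdet, one_mulVec]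
  set w : ι → ℝ := fun k => if h : k ∈ G then u ⟨k, h⟩ else 0 with hw
  set y : ι → ℝ := Pi.single i 1 - w with hy
  have hyne : y ≠ 0 := by
    refine Function.ne_iff.mpr ⟨i, ?_⟩
    simp [hy, hw, dif_neg hi]
  have hq := hM.dotProduct_mulVec_pos hyne
  rw [star_trivial] at hq
  have hexp : dotProduct y (M *ᵥ y) = condVar M i G := by
    rw [hy, sub_dotProduct, mulVec_sub, dotProduct_sub, dotProduct_sub]
    have t1 : dotProduct (Pi.single i 1) (M *ᵥ Pi.single i 1) = M i i := by
      rw [single_dotProduct, mulVec_single]; simp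
    have t2 : dotProduct (Pi.single i 1) (M *ᵥ w) =
        dotProduct (fun j : G => M i j.1) (A⁻¹ *ᵥ fun j : G => M j.1 i) := by
      rw [single_dotProduct, one_mul, hw, mulVec_dext, dotProduct]
    have t3 : dotProduct w (M *ᵥ Pi.single i 1) = dotProduct u c := by
      rw [hw, dext_dot, dotProduct]
      refine Finset.sum_congr rfl (fun j _ => ?_)
      rw [mulVec_single]; simp [hc]
    have t4 : dotProduct w (M *ᵥ w) = dotProduct u c := by
      rw [hw, dext_quad, ← hA, hAu]
    rw [t1, t2, t3, t4, condVar]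
    ring
  linarith [hexp ▸ hq]

lemma rfCov_posDef {n : ℕ} {K D : Matrix (Fin n) (Fin n) ℝ} (hK : K.PosDef)
    (hDdiag : ∀ i j, i ≠ j → D i j = 0) (hDpos : ∀ i, 0 < D i i) (o : Finset (Fin n)) :
    (rfCov K D o).PosDef := by
  classical
  have hKs : ∀ i j, K i j = K j i := fun i j => by simpa using hK.1.apply j i
  have hDs : ∀ i j, D i j = D j i := by
    intro i j
    by_cases h : i = j
    · rw [h]
    · rw [hDdiag i j h, hDdiag j i (Ne.symm h)]
  refine Matrix.PosDef.of_dotProduct_mulVec_pos ?_ ?_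
  · ext a b
    rcases a with j | i <;> rcases b with k | i' <;>
      simp [rfCov, Matrix.conjTranspose_apply, Matrix.fromBlocks, Matrix.add_apply] <;>
      simp [hKs _ _, hDs _ _]
  · intro x hx
    rw [star_trivial]
    set w : Fin n → ℝ := fun i => if h : i ∈ o then x (Sum.inl ⟨i, h⟩) else 0 with hw
    set u : Fin n → ℝ := fun i => w i + x (Sum.inr i) with hu
    have hwd : ∀ (f : Fin n → ℝ),
        ∑ i : Fin n, f i * w i = ∑ j : ↥o, f j.1 * x (Sum.inl j) :=
      fun f => sum_dext o (fun j => x (Sum.inl j)) f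
    have hrow1 : ∀ j : ↥o, (rfCov K D o *ᵥ x) (Sum.inl j)
        = (K *ᵥ u) j.1 + D j.1 j.1 * x (Sum.inl j) := by
      intro j
      rw [mulVec, dotProduct, Fintype.sum_sum_type]
      have e1 : ∑ k : ↥o, rfCov K D o (Sum.inl j) (Sum.inl k) * x (Sum.inl k)
          = (∑ k : ↥o, K j.1 k.1 * x (Sum.inl k)) + D j.1 j.1 * x (Sum.inl j) := by
        rw [show (∑ k : ↥o, rfCov K D o (Sum.inl j) (Sum.inl k) * x (Sum.inl k))
            = ∑ k : ↥o, (K j.1 k.1 * x (Sum.inl k) + D j.1 k.1 * x (Sum.inl k)) from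
          Finset.sum_congr rfl (fun k _ => by simp [rfCov, Matrix.fromBlocks, add_mul]),
          Finset.sum_add_distrib]
        congr 1
        rw [Finset.sum_eq_single j]
        · intro k _ hk
          rw [hDdiag j.1 k.1 (fun hh => hk (Subtype.ext hh).symm)]
          ring
        · intro h; exact absurd (Finset.mem_univ j) h
      have e2 : ∑ i : Fin n, rfCov K D o (Sum.inl j) (Sum.inr i) * x (Sum.inr i)
          = ∑ i : Fin n, K j.1 i * x (Sum.inr i) :=
        Finset.sum_congr rfl (fun i _ => by simp [rfCov, Matrix.fromBlocks])
      rw [e1, e2, mulVec, dotProduct]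
      rw [show (∑ i : Fin n, K j.1 i * u i)
          = ∑ i : Fin n, (K j.1 i * w i + K j.1 i * x (Sum.inr i)) from
        Finset.sum_congr rfl (fun i _ => by rw [hu]; ring), Finset.sum_add_distrib, hwd (K j.1)]
      ring
    have hrow2 : ∀ i : Fin n, (rfCov K D o *ᵥ x) (Sum.inr i) = (K *ᵥ u) i := by
      intro i
      rw [mulVec, dotProduct, Fintype.sum_sum_type]
      have e1 : ∑ k : ↥o, rfCov K D o (Sum.inr i) (Sum.inl k) * x (Sum.inl k)
          = ∑ k : ↥o, K i k.1 * x (Sum.inl k) :=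
        Finset.sum_congr rfl (fun k _ => by simp [rfCov, Matrix.fromBlocks])
      have e2 : ∑ i' : Fin n, rfCov K D o (Sum.inr i) (Sum.inr i') * x (Sum.inr i')
          = ∑ i' : Fin n, K i i' * x (Sum.inr i') :=
        Finset.sum_congr rfl (fun i' _ => by simp [rfCov, Matrix.fromBlocks])
      rw [e1, e2, mulVec, dotProduct]
      rw [show (∑ i' : Fin n, K i i' * u i')
          = ∑ i' : Fin n, (K i i' * w i' + K i i' * x (Sum.inr i')) from
        Finset.sum_congr rfl (fun i' _ => by rw [hu]; ring), Finset.sum_add_distrib, hwd (K i)]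
    have hquad : dotProduct x (rfCov K D o *ᵥ x)
        = dotProduct u (K *ᵥ u) + ∑ j : ↥o, D j.1 j.1 * x (Sum.inl j) ^ 2 := by
      rw [dotProduct, Fintype.sum_sum_type]
      rw [show (∑ j : ↥o, x (Sum.inl j) * (rfCov K D o *ᵥ x) (Sum.inl j))
          = ∑ j : ↥o, (x (Sum.inl j) * (K *ᵥ u) j.1 + D j.1 j.1 * x (Sum.inl j) ^ 2) from
        Finset.sum_congr rfl (fun j _ => by rw [hrow1 j]; ring), Finset.sum_add_distrib]
      rw [show (∑ i : Fin n, x (Sum.inr i) * (rfCov K D o *ᵥ x) (Sum.inr i))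
          = ∑ i : Fin n, x (Sum.inr i) * (K *ᵥ u) i from
        Finset.sum_congr rfl (fun i _ => by rw [hrow2 i])]
      have : ∑ j : ↥o, x (Sum.inl j) * (K *ᵥ u) j.1 = ∑ i : Fin n, (K *ᵥ u) i * w i := by
        rw [hwd (K *ᵥ u)]
        exact Finset.sum_congr rfl (fun j _ => mul_comm _ _)
      rw [this, dotProduct]
      rw [show (∑ i : Fin n, u i * (K *ᵥ u) i)
          = ∑ i : Fin n, ((K *ᵥ u) i * w i + x (Sum.inr i) * (K *ᵥ u) i) from
        Finset.sum_congr rfl (fun i _ => by rw [hu]; ring), Finset.sum_add_distrib]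
      ring
    rw [hquad]
    by_cases hz : ∀ j : ↥o, x (Sum.inl j) = 0
    · have hw0 : w = 0 := by
        funext i
        by_cases h : i ∈ o
        · simp only [hw, dif_pos h, Pi.zero_apply]; exact hz _
        · simp only [hw, dif_neg h, Pi.zero_apply]
      have hune : u ≠ 0 := by
        obtain ⟨a, ha⟩ := Function.ne_iff.mp hx
        rcases a with j | i
        · exact absurd (hz j) ha
        · refine Function.ne_iff.mpr ⟨i, ?_⟩
          simpa [hu, hw0] using ha
      have h1 := hK.dotProduct_mulVec_pos hune
      rw [star_trivial] at h1
      have h2 : 0 ≤ ∑ j : ↥o, D j.1 j.1 * x (Sum.inl j) ^ 2 :=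
        Finset.sum_nonneg (fun j _ => mul_nonneg (hDpos j.1).le (sq_nonneg _))
      linarith
    · push_neg at hz
      obtain ⟨j, hj⟩ := hz
      have h1 := hK.posSemidef.dotProduct_mulVec_nonneg u
      rw [star_trivial] at h1
      have h2 : 0 < ∑ j : ↥o, D j.1 j.1 * x (Sum.inl j) ^ 2 := by
        refine Finset.sum_pos' (fun k _ => mul_nonneg (hDpos k.1).le (sq_nonneg _)) ⟨j, Finset.mem_univ j, ?_⟩
        exact mul_pos (hDpos j.1) (sq_pos_iff.mpr hj)
      linarith

lemma gauss1_eq_pdf (μ : ℝ) {v : ℝ} (hv : 0 < v) :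
    gauss1 μ v = ProbabilityTheory.gaussianPDFReal μ ⟨v, hv.le⟩ := rfl

lemma integral_gauss1 {v : ℝ} (hv : 0 < v) (μ : ℝ) : ∫ t, gauss1 μ v t = 1 := by
  rw [show (fun t => gauss1 μ v t) = gauss1 μ v from rfl, gauss1_eq_pdf μ hv]
  exact ProbabilityTheory.integral_gaussianPDFReal_eq_one μ
    (fun h => hv.ne' (congrArg (fun r : NNReal => (r : ℝ)) h))

lemma gauss1_pos {v : ℝ} (hv : 0 < v) (μ t : ℝ) : 0 < gauss1 μ v t := by
  rw [gauss1_eq_pdf μ hv]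
  exact ProbabilityTheory.gaussianPDFReal_pos μ _ t
    (fun h => hv.ne' (congrArg (fun r : NNReal => (r : ℝ)) h))

lemma condMean_image_inl {n : ℕ} {o : Finset (Fin n)}
    (M : Matrix (↥o ⊕ Fin n) (↥o ⊕ Fin n) ℝ)
    (a : ↥o ⊕ Fin n) (s : Finset ↥o) (x x' : ↥o ⊕ Fin n → ℝ)
    (hxx' : ∀ j : ↥o, x (Sum.inl j) = x' (Sum.inl j)) :
    condMean 0 M a (s.image Sum.inl) x = condMean 0 M a (s.image Sum.inl) x' := by
  have hv : (fun j : ↥(s.image Sum.inl) => x j.1 - (0 : (↥o ⊕ Fin n) → ℝ) j.1)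
      = (fun j : ↥(s.image Sum.inl) => x' j.1 - (0 : (↥o ⊕ Fin n) → ℝ) j.1) := by
    funext j
    obtain ⟨k, _, hk⟩ := Finset.mem_image.mp j.2
    rw [← hk, hxx' k]
  rw [condMean, condMean, hv]

lemma condMean_zero (M : Matrix ι ι ℝ) (a : ι) (G : Finset ι) :
    condMean (0 : ι → ℝ) M a G 0 = 0 := by
  have hv : (fun j : ↥G => (0 : ι → ℝ) j.1 - (0 : ι → ℝ) j.1) = 0 :=
    funext fun j => by simp
  rw [condMean, hv, mulVec_zero, dotProduct_zero]
  simp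

/-- **RF-ind is exact local kriging.** Under the RF-ind Vecchia approximation
`f̂(x) = (∏_{i∈o} f(z i | z_{gz i})) ∏ᵢ f(y i | z_{qz i})`, the implied posterior predictive
density factorizes as `f̂(y | z_o) = ∏ᵢ f(y i | z_{qz i})`: given `z_o` the components of `y`
are independent, `y i | z_o ~ N(E(y i | z_{qz i}), Var(y i | z_{qz i}))`; and the `y`-block
of the precision matrix `Q` of `f̂` is diagonal with entries `1 / Var(y i | z_{qz i})`. -/
theorem rf_ind_is_local_kriging
    {n : ℕ} (K D : Matrix (Fin n) (Fin n) ℝ)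
    (hK : K.PosDef) (hDdiag : ∀ i j, i ≠ j → D i j = 0) (hDpos : ∀ i, 0 < D i i)
    (o : Finset (Fin n))
    (gz : ↥o → Finset ↥o) (hgz : ∀ j, ∀ k ∈ gz j, k.1 < j.1)
    (qz : Fin n → Finset ↥o) :
    (∀ (zv : ↥o → ℝ) (yv : Fin n → ℝ),
        vecchia 0 (rfCov K D o) (gInd o gz qz) (Sum.elim zv yv) /
            (∫ yw : Fin n → ℝ, vecchia 0 (rfCov K D o) (gInd o gz qz) (Sum.elim zv yw)) =
          ∏ i : Fin n,
            condDens 0 (rfCov K D o) (Sum.inr i) ((qz i).image Sum.inl) (Sum.elim zv yv)) ∧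
      ∀ Q : Matrix (↥o ⊕ Fin n) (↥o ⊕ Fin n) ℝ, Q.PosDef →
        (∀ x, vecchia 0 (rfCov K D o) (gInd o gz qz) x = gaussDensity 0 Q⁻¹ x) →
        ∀ i i' : Fin n,
          Q (Sum.inr i) (Sum.inr i') =
            if i = i' then (condVar (rfCov K D o) (Sum.inr i) ((qz i).image Sum.inl))⁻¹
            else 0 := by
  classical
  constructor
  ·
    classical
    intro zv yv
    set M := rfCov K D o with hMdef
    set g := gInd o gz qz with hgdef
    have Mpd : M.PosDef := rfCov_posDef hK hDdiag hDpos o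
    have hnotmem : ∀ a : ↥o ⊕ Fin n, a ∉ g a := by
      intro a
      rcases a with j | i
      · intro hmem
        rw [hgdef] at hmem
        simp only [gInd, Finset.mem_image] at hmem
        obtain ⟨k, hk, hkeq⟩ := hmem
        have : k = j := Sum.inl.inj hkeq
        exact absurd (hgz j k hk) (by rw [this]; exact lt_irrefl _)
      · intro hmem
        rw [hgdef] at hmem
        simp only [gInd, Finset.mem_image] at hmem
        obtain ⟨k, _, hkeq⟩ := hmem
        exact Sum.inl_ne_inr hkeq
    have hvpos : ∀ a, 0 < condVar M a (g a) := fun a => condVar_pos Mpd (hnotmem a)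
    set mi : Fin n → ℝ :=
      fun i => condMean 0 M (Sum.inr i) ((qz i).image Sum.inl) (Sum.elim zv yv) with hmi
    have hcdr : ∀ (i : Fin n) (yw : Fin n → ℝ),
        condDens 0 M (Sum.inr i) ((qz i).image Sum.inl) (Sum.elim zv yw)
          = gauss1 (mi i) (condVar M (Sum.inr i) ((qz i).image Sum.inl)) (yw i) := by
      intro i yw
      rw [condDens, hmi]
      rw [condMean_image_inl M (Sum.inr i) (qz i) (Sum.elim zv yw) (Sum.elim zv yv)
        (fun j => rfl)]
      rfl
    set CA : ℝ := ∏ j : ↥o, condDens 0 M (Sum.inl j) (g (Sum.inl j)) (Sum.elim zv yv) with hCA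
    have hcdl : ∀ (j : ↥o) (yw : Fin n → ℝ),
        condDens 0 M (Sum.inl j) (g (Sum.inl j)) (Sum.elim zv yw)
          = condDens 0 M (Sum.inl j) (g (Sum.inl j)) (Sum.elim zv yv) := by
      intro j yw
      rw [condDens, condDens]
      have hgj : g (Sum.inl j) = (gz j).image Sum.inl := by rw [hgdef]; rfl
      rw [hgj]
      rw [condMean_image_inl M (Sum.inl j) (gz j) (Sum.elim zv yw) (Sum.elim zv yv)
        (fun k => rfl)]
      rfl
    have hsplit : ∀ yw : Fin n → ℝ,
        vecchia 0 M g (Sum.elim zv yw)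
          = CA * ∏ i : Fin n,
              gauss1 (mi i) (condVar M (Sum.inr i) ((qz i).image Sum.inl)) (yw i) := by
      intro yw
      have h1 : ∏ j : ↥o, condDens 0 M (Sum.inl j) (g (Sum.inl j)) (Sum.elim zv yw) = CA :=
        Finset.prod_congr rfl (fun j _ => hcdl j yw)
      have h2 : ∏ i : Fin n, condDens 0 M (Sum.inr i) (g (Sum.inr i)) (Sum.elim zv yw)
          = ∏ i : Fin n,
              gauss1 (mi i) (condVar M (Sum.inr i) ((qz i).image Sum.inl)) (yw i) := by
        refine Finset.prod_congr rfl (fun i _ => ?_)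
        have hgi : g (Sum.inr i) = (qz i).image Sum.inl := by rw [hgdef]; rfl
        rw [hgi, hcdr i yw]
      rw [vecchia, Fintype.prod_sum_type, h1, h2]
    have hint : (∫ yw : Fin n → ℝ, vecchia 0 M g (Sum.elim zv yw)) = CA := by
      simp only [hsplit]
      rw [MeasureTheory.integral_const_mul]
      rw [MeasureTheory.integral_fintype_prod_volume_eq_prod (ι := Fin n)
        (fun i t => gauss1 (mi i) (condVar M (Sum.inr i) ((qz i).image Sum.inl)) t)]
      have h3 : ∀ i : Fin n,
          (∫ x : ℝ, gauss1 (mi i) (condVar M (Sum.inr i) ((qz i).image Sum.inl)) x) = 1 :=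
        fun i => integral_gauss1 (hvpos (Sum.inr i)) (mi i)
      rw [Finset.prod_congr rfl (fun i _ => h3 i), Finset.prod_const_one, mul_one]
    have hCApos : 0 < CA := by
      refine Finset.prod_pos (fun j _ => ?_)
      rw [condDens]
      exact gauss1_pos (hvpos (Sum.inl j)) _ _
    rw [hint, hsplit yv, mul_comm CA, mul_div_assoc, div_self hCApos.ne', mul_one]
    exact Finset.prod_congr rfl (fun i _ => (hcdr i yv).symm)
  ·
    intro Q hQ h i i'
    set M := rfCov K D o with hMdef
    set g := gInd o gz qz with hgdef
    have Mpd : M.PosDef := rfCov_posDef hK hDdiag hDpos o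
    have hnotmem : ∀ a : ↥o ⊕ Fin n, a ∉ g a := by
      intro a
      rcases a with j | i0
      · intro hmem
        rw [hgdef] at hmem
        simp only [gInd, Finset.mem_image] at hmem
        obtain ⟨k, hk, hkeq⟩ := hmem
        have hkj : k = j := Sum.inl.inj hkeq
        exact absurd (hgz j k hk) (by rw [hkj]; exact lt_irrefl _)
      · intro hmem
        rw [hgdef] at hmem
        simp only [gInd, Finset.mem_image] at hmem
        obtain ⟨k, _, hkeq⟩ := hmem
        exact Sum.inl_ne_inr hkeq
    have hvpos : ∀ a, 0 < condVar M a (g a) := fun a => condVar_pos Mpd (hnotmem a)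
    set v : (↥o ⊕ Fin n) → ℝ := fun a => condVar M a (g a) with hv
    set Cv : ℝ := ∏ a : ↥o ⊕ Fin n, (Real.sqrt (2 * π * v a))⁻¹ with hCv
    have hCvpos : 0 < Cv := by
      refine Finset.prod_pos (fun a _ => ?_)
      exact inv_pos.mpr (Real.sqrt_pos.mpr (by have := hvpos a; positivity))
    have hvec : ∀ x : (↥o ⊕ Fin n) → ℝ,
        vecchia 0 M g x
          = Cv * Real.exp (-(∑ a : ↥o ⊕ Fin n, (x a - condMean 0 M a (g a) x) ^ 2 / v a) / 2) := by
      intro x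
      rw [vecchia]
      calc ∏ a : ↥o ⊕ Fin n, condDens 0 M a (g a) x
          = ∏ a : ↥o ⊕ Fin n, ((Real.sqrt (2 * π * v a))⁻¹ *
              Real.exp (-((x a - condMean 0 M a (g a) x) ^ 2) / (2 * v a))) := rfl
        _ = Cv * ∏ a : ↥o ⊕ Fin n,
              Real.exp (-((x a - condMean 0 M a (g a) x) ^ 2) / (2 * v a)) :=
          Finset.prod_mul_distrib
        _ = Cv * Real.exp (∑ a : ↥o ⊕ Fin n,
              -((x a - condMean 0 M a (g a) x) ^ 2) / (2 * v a)) := by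
          rw [Real.exp_sum]
        _ = Cv * Real.exp (-(∑ a : ↥o ⊕ Fin n,
              (x a - condMean 0 M a (g a) x) ^ 2 / v a) / 2) := by
          congr 1
          rw [show (∑ a : ↥o ⊕ Fin n, -((x a - condMean 0 M a (g a) x) ^ 2) / (2 * v a))
              = ∑ a : ↥o ⊕ Fin n, (-((x a - condMean 0 M a (g a) x) ^ 2 / v a)) / 2 from
            Finset.sum_congr rfl (fun a _ => by ring), ← Finset.sum_div, ← Finset.sum_neg_distrib]
    set Cq : ℝ := (Real.sqrt ((2 * π) ^ (Fintype.card (↥o ⊕ Fin n)) * (Q⁻¹).det))⁻¹ with hCq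
    have hgauss : ∀ x : (↥o ⊕ Fin n) → ℝ,
        gaussDensity 0 Q⁻¹ x = Cq * Real.exp (-(dotProduct x (Q *ᵥ x)) / 2) := by
      intro x
      rw [gaussDensity, sub_zero,
        Matrix.nonsing_inv_nonsing_inv Q (isUnit_iff_ne_zero.mpr hQ.det_pos.ne')]
    have hCvq : Cv = Cq := by
      have h0 := h 0
      rw [hvec 0, hgauss 0] at h0
      have e1 : (∑ a : ↥o ⊕ Fin n, ((0 : (↥o ⊕ Fin n) → ℝ) a - condMean 0 M a (g a) 0) ^ 2 / v a)
          = 0 := by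
        refine Finset.sum_eq_zero (fun a _ => ?_)
        rw [condMean_zero M a (g a)]
        simp
      rw [e1, zero_dotProduct] at h0
      simpa using h0
    have heq : ∀ x : (↥o ⊕ Fin n) → ℝ,
        (∑ a : ↥o ⊕ Fin n, (x a - condMean 0 M a (g a) x) ^ 2 / v a)
          = dotProduct x (Q *ᵥ x) := by
      intro x
      have hx := h x
      rw [hvec x, hgauss x, ← hCvq] at hx
      have hx2 := mul_left_cancel₀ hCvpos.ne' hx
      have hx3 := Real.exp_eq_exp.mp hx2
      linarith
    have hm0 : ∀ (a : ↥o ⊕ Fin n) (x : (↥o ⊕ Fin n) → ℝ),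
        (∀ j : ↥o, x (Sum.inl j) = 0) → condMean 0 M a (g a) x = 0 := by
      intro a x hx
      have key : ∀ s : Finset ↥o, condMean 0 M a (s.image Sum.inl) x = 0 := by
        intro s
        rw [condMean_image_inl M a s x 0 (fun j => by rw [hx j]; rfl), condMean_zero]
      rcases a with j | i0
      · exact key (gz j)
      · exact key (qz i0)
    have hsuppT : ∀ x : (↥o ⊕ Fin n) → ℝ, (∀ j : ↥o, x (Sum.inl j) = 0) →
        (∑ a : ↥o ⊕ Fin n, (x a - condMean 0 M a (g a) x) ^ 2 / v a)
          = ∑ a : ↥o ⊕ Fin n, (x a) ^ 2 / v a :=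
      fun x hx => Finset.sum_congr rfl (fun a _ => by rw [hm0 a x hx, sub_zero])
    have hsum_single : ∀ b : ↥o ⊕ Fin n,
        (∑ a : ↥o ⊕ Fin n, ((Pi.single b (1 : ℝ) : (↥o ⊕ Fin n) → ℝ) a) ^ 2 / v a) = (v b)⁻¹ := by
      intro b
      rw [Finset.sum_eq_single b]
      · rw [Pi.single_eq_same]; rw [one_pow, one_div]
      · intro a _ hab
        rw [Pi.single_eq_of_ne hab]
        simp
      · intro hb; exact absurd (Finset.mem_univ b) hb
    have hqcd : ∀ c d : ↥o ⊕ Fin n,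
        dotProduct (Pi.single c (1 : ℝ)) (Q *ᵥ Pi.single d 1) = Q c d := by
      intro c d
      rw [single_dotProduct, mulVec_single]
      simp
    have hdiag : ∀ i0 : Fin n, Q (Sum.inr i0) (Sum.inr i0) = (v (Sum.inr i0))⁻¹ := by
      intro i0
      have hx0 : ∀ j : ↥o, (Pi.single (Sum.inr i0) (1 : ℝ) : (↥o ⊕ Fin n) → ℝ) (Sum.inl j) = 0 :=
        fun j => Pi.single_eq_of_ne (by simp) _
      have := heq (Pi.single (Sum.inr i0) 1)
      rw [hsuppT _ hx0, hsum_single, hqcd] at this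
      exact this.symm
    rcases eq_or_ne i i' with rfl | hii'
    · rw [if_pos rfl]
      exact hdiag i
    · rw [if_neg hii']
      set a : ↥o ⊕ Fin n := Sum.inr i with ha
      set b : ↥o ⊕ Fin n := Sum.inr i' with hb
      have hab : a ≠ b := by simp [ha, hb, hii']
      set x : (↥o ⊕ Fin n) → ℝ := Pi.single a 1 + Pi.single b 1 with hx
      have hx0 : ∀ j : ↥o, x (Sum.inl j) = 0 := by
        intro j
        rw [hx, Pi.add_apply, Pi.single_eq_of_ne (by simp [ha]) _,
          Pi.single_eq_of_ne (by simp [hb]) _, add_zero]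
      have hptwise : ∀ c : ↥o ⊕ Fin n,
          (x c) ^ 2 = ((Pi.single a (1 : ℝ) : (↥o ⊕ Fin n) → ℝ) c) ^ 2
            + ((Pi.single b (1 : ℝ) : (↥o ⊕ Fin n) → ℝ) c) ^ 2 := by
        intro c
        rcases eq_or_ne c a with rfl | hca
        · rw [hx, Pi.add_apply, Pi.single_eq_same, Pi.single_eq_of_ne hab]
          norm_num
        · rcases eq_or_ne c b with rfl | hcb
          · rw [hx, Pi.add_apply, Pi.single_eq_same, Pi.single_eq_of_ne hab.symm]
            norm_num
          · rw [hx, Pi.add_apply, Pi.single_eq_of_ne hca, Pi.single_eq_of_ne hcb]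
            norm_num
      have hsum2 : (∑ c : ↥o ⊕ Fin n, (x c) ^ 2 / v c) = (v a)⁻¹ + (v b)⁻¹ := by
        rw [Finset.sum_congr rfl (fun c _ => by rw [hptwise c, add_div]),
          Finset.sum_add_distrib, hsum_single a, hsum_single b]
      have hquad2 : dotProduct x (Q *ᵥ x) = Q a a + Q a b + Q b a + Q b b := by
        rw [hx, add_dotProduct, mulVec_add, dotProduct_add, dotProduct_add,
          hqcd a a, hqcd a b, hqcd b a, hqcd b b]
        ring
      have hsym : Q b a = Q a b := by
        have hherm := hQ.1.apply a b
        rw [star_trivial] at hherm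
        exact hherm
      have hfin := heq x
      rw [hsuppT x hx0, hsum2, hquad2] at hfin
      have hQaa := hdiag i
      have hQbb := hdiag i'
      rw [← ha] at hQaa
      rw [← hb] at hQbb
      linarith [hfin, hQaa, hQbb, hsym]


end
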